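/- arXiv:1708.06696 — 2 statements merged into one kernel-verified Lean document; each statement's English description precedes it below -/
import Mathlib

section
/- If s,h ⊨ Sorted(Σ) ∧ Σ, then the addresses listed by the atoms of Σ (under s) are exactly Dom(h), and the least element of Dom(h) (when Σ is nonempty, i.e., not all-emp) is the address of the first non-emp atom of Σ. -/
abbrev Var := ℕ
abbrev Store := Var → ℕ
abbrev Heap := ℕ → Option ℕ

def Dom (h : Heap) : Set ℕ := {n | h n ≠ none}

def hunion (h1 h2 : Heap) : Heap := fun n =>
  match h1 n with
  | some v => some v
  | none => h2 n

def hempty : Heap := fun _ => none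

inductive Term
  | var : Var → Term
  | const : ℕ → Term
  | add : Term → Term → Term

def Term.eval (s : Store) : Term → ℕ
  | .var x => s x
  | .const n => n
  | .add t u => t.eval s + u.eval s

def Term.FV : Term → Set Var
  | .var x => {x}
  | .const _ => ∅
  | .add t u => t.FV ∪ u.FV

inductive Formula
  | eq : Term → Term → Formula
  | and : Formula → Formula → Formula
  | not : Formula → Formula
  | ex : Var → Formula → Formula
  | emp : Formula
  | pto : Term → Term → Formula
  | arr : Term → Term → Formula
  | sep : Formula → Formula → Formula

def sat (s : Store) (h : Heap) : Formula → Prop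
  | .eq t u => t.eval s = u.eval s
  | .and f g => sat s h f ∧ sat s h g
  | .not f => ¬ sat s h f
  | .ex x f => ∃ a : ℕ, sat (Function.update s x a) h f
  | .emp => Dom h = ∅
  | .pto t u => Dom h = {t.eval s} ∧ h (t.eval s) = some (u.eval s)
  | .arr t u => t.eval s ≤ u.eval s ∧ Dom h = Set.Icc (t.eval s) (u.eval s)
  | .sep f g => ∃ h1 h2 : Heap, Dom h1 ∩ Dom h2 = ∅ ∧ h = hunion h1 h2 ∧ sat s h1 f ∧ sat s h2 g

def Formula.FV : Formula → Set Var
  | .eq t u => t.FV ∪ u.FV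
  | .and f g => f.FV ∪ g.FV
  | .not f => f.FV
  | .ex x f => f.FV \ {x}
  | .emp => ∅
  | .pto t u => t.FV ∪ u.FV
  | .arr t u => t.FV ∪ u.FV
  | .sep f g => f.FV ∪ g.FV

inductive Atom
  | emp : Atom
  | pto : Term → Term → Atom
  | arr : Term → Term → Atom

abbrev Spatial := List Atom

def satAtom (s : Store) (h : Heap) : Atom → Prop
  | .emp => Dom h = ∅
  | .pto t u => Dom h = {t.eval s} ∧ h (t.eval s) = some (u.eval s)
  | .arr t u => t.eval s ≤ u.eval s ∧ Dom h = Set.Icc (t.eval s) (u.eval s)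

def satSp (s : Store) (h : Heap) : Spatial → Prop
  | [] => Dom h = ∅
  | a :: sg => ∃ h1 h2 : Heap, Dom h1 ∩ Dom h2 = ∅ ∧ h = hunion h1 h2 ∧
      satAtom s h1 a ∧ satSp s h2 sg

def ltSp (s : Store) (v : ℕ) : Spatial → Prop
  | [] => True
  | .emp :: sg => ltSp s v sg
  | .pto t _ :: _ => v < t.eval s
  | .arr t _ :: _ => v < t.eval s

def sorted' (s : Store) : Spatial → Prop
  | [] => True
  | .emp :: sg => sorted' s sg
  | .pto t _ :: sg => ltSp s (t.eval s) sg ∧ sorted' s sg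
  | .arr t u :: sg => t.eval s ≤ u.eval s ∧ ltSp s (u.eval s) sg ∧ sorted' s sg

def sortedSp (s : Store) (sg : Spatial) : Prop := ltSp s 0 sg ∧ sorted' s sg

def SDom (s : Store) : Spatial → Set ℕ
  | [] => ∅
  | .emp :: sg => SDom s sg
  | .pto t _ :: sg => {t.eval s} ∪ SDom s sg
  | .arr t u :: sg => Set.Icc (t.eval s) (u.eval s) ∪ SDom s sg

/-- address of the first non-emp atom of a spatial formula (if any) -/
def firstAddr (s : Store) : Spatial → Option ℕ
  | [] => none
  | .emp :: sg => firstAddr s sg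
  | .pto t _ :: _ => some (t.eval s)
  | .arr t _ :: _ => some (t.eval s)


lemma dom_hunion (h1 h2 : Heap) : Dom (hunion h1 h2) = Dom h1 ∪ Dom h2 := by
  ext n
  simp only [Dom, hunion, Set.mem_setOf_eq, Set.mem_union]
  cases h1 n <;> simp

lemma dom_eq_sdom (s : Store) (h : Heap) (sg : Spatial) (hsat : satSp s h sg) :
    Dom h = SDom s sg := by
  induction sg generalizing h with
  | nil => exact hsat
  | cons a sg ih =>
    obtain ⟨h1, h2, _, rfl, ha, hrest⟩ := hsat
    rw [dom_hunion, ih h2 hrest]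
    cases a with
    | emp => rw [ha]; simp [SDom]
    | pto t u => rw [ha.1]; rfl
    | arr t u => rw [ha.2]; rfl

lemma lt_of_ltSp (s : Store) (sg : Spatial) (hs : sorted' s sg) :
    ∀ v, ltSp s v sg → ∀ x ∈ SDom s sg, v < x := by
  induction sg with
  | nil => intro v _ x hx; exact absurd hx (Set.notMem_empty x)
  | cons a sg ih =>
    cases a with
    | emp => exact fun v hv x hx => ih hs v hv x hx
    | pto t u =>
      intro v hv x hx
      rcases hx with hx | hx
      · exact hx ▸ hv
      · exact hv.trans (ih hs.2 _ hs.1 x hx)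
    | arr t u =>
      intro v hv x hx
      rcases hx with hx | hx
      · exact lt_of_lt_of_le hv hx.1
      · exact hv.trans (lt_of_le_of_lt hs.1 (ih hs.2.2 _ hs.2.1 x hx))

lemma sdom_least (s : Store) (sg : Spatial) (hs : sortedSp s sg) :
    ∀ a : ℕ, firstAddr s sg = some a → IsLeast (SDom s sg) a := by
  induction sg with
  | nil => intro a ha; simp [firstAddr] at ha
  | cons at' sg ih =>
    cases at' with
    | emp => exact ih ⟨hs.1, hs.2⟩
    | pto t u =>
      intro a ha
      simp only [firstAddr, Option.some.injEq] at ha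
      subst ha
      constructor
      · exact Or.inl rfl
      · intro x hx
        rcases hx with hx | hx
        · exact hx.ge
        · exact (lt_of_ltSp s sg hs.2.2 _ hs.2.1 x hx).le
    | arr t u =>
      intro a ha
      simp only [firstAddr, Option.some.injEq] at ha
      subst ha
      constructor
      · exact Or.inl ⟨le_refl _, hs.2.1⟩
      · intro x hx
        rcases hx with hx | hx
        · exact hx.1
        · exact hs.2.1.trans (lt_of_ltSp s sg hs.2.2.2 _ hs.2.2.1 x hx).le

/-- if `s,h ⊨ Sorted(Σ) ∧ Σ` then the addresses listed by `Σ`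
are exactly `Dom(h)`, and the least element of `Dom(h)` is the address of the
first non-emp atom of `Σ` (when `Σ` is not all-emp). -/
theorem stmt11 (s : Store) (h : Heap) (sg : Spatial)
    (hs : sortedSp s sg) (hsat : satSp s h sg) :
    Dom h = SDom s sg ∧ ∀ a : ℕ, firstAddr s sg = some a → IsLeast (Dom h) a := by
  have hd := dom_eq_sdom s h sg hsat
  exact ⟨hd, fun a ha => hd ▸ sdom_least s sg hs a ha⟩
end

section
/- If s,h ⊨ Π ∧ Sorted(Σ) ∧ Σ and s,h' ⊨ Π ∧ Sorted(Σ) ∧ Σ for two heaps h, h' with the same store s, then Dom(h) = Dom(h') (satisfaction of a pure-plus-spatial symbolic heap at a fixed store determines the heap domain uniquely). -/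
lemma satSp_dom (s : Store) : ∀ (sg : Spatial) (h : Heap), satSp s h sg → Dom h = SDom s sg
  | [], h, H => by simpa [SDom, satSp] using H
  | a :: sg, h, H => by
    obtain ⟨h1, h2, -, rfl, Ha, Hsg⟩ := H
    have ih := satSp_dom s sg h2 Hsg
    cases a with
    | emp => simp [SDom, dom_hunion, satAtom] at Ha ⊢; simp [Ha, ih]
    | pto t u => simp [SDom, dom_hunion, ih, Ha.1]
    | arr t u => simp [SDom, dom_hunion, ih, Ha.2]

/-- satisfaction of a symbolic heap `Π ∧ Sorted(Σ) ∧ Σ` at a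
fixed store determines the heap domain uniquely. -/
theorem stmt18 (s : Store) (h h' : Heap) (Pi : Store → Prop) (sg : Spatial)
    (H1 : Pi s ∧ sortedSp s sg ∧ satSp s h sg)
    (H2 : Pi s ∧ sortedSp s sg ∧ satSp s h' sg) :
    Dom h = Dom h' := by
  rw [satSp_dom s sg h H1.2.2, satSp_dom s sg h' H2.2.2]
end
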